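/- arXiv:2603.08149 — 6 statements merged into one kernel-verified Lean document; each statement's English description precedes it below -/
import Mathlib

section
/- Let μ be a probability measure on [0,1]² both of whose coordinate marginals are the Lebesgue (uniform) measure on [0,1], and let C(u,v) = μ([0,u]×[0,v]) denote its distribution function. Then ∫_{[0,1]²} max(u+v−1, 0) dμ(u,v) = ∫₀¹ C(u, 1−u) du. -/
open MeasureTheory

private lemma ofReal_max_zero' (x : ℝ) : ENNReal.ofReal (max x 0) = ENNReal.ofReal x := by
  rcases le_total x 0 with h | h
  · rw [max_eq_right h, ENNReal.ofReal_zero, ENNReal.ofReal_of_nonpos h]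
  · rw [max_eq_left h]

/-- If `μ` is a probability measure on `[0,1]²` whose coordinate marginals
are both the uniform (Lebesgue) measure on `[0,1]`, and `C(u,v) = μ([0,u]×[0,v])` is its
distribution function, then `∫_{[0,1]²} max(u+v−1, 0) dμ = ∫₀¹ C(u, 1−u) du`. -/
theorem W_integral_eq_antidiagonal_integral
    (μ : Measure (ℝ × ℝ)) [IsProbabilityMeasure μ]
    (hfst : μ.map Prod.fst = volume.restrict (Set.Icc (0:ℝ) 1))
    (hsnd : μ.map Prod.snd = volume.restrict (Set.Icc (0:ℝ) 1))
    (C : ℝ → ℝ → ℝ)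
    (hC : ∀ u v : ℝ, C u v = (μ (Set.Icc (0:ℝ) u ×ˢ Set.Icc (0:ℝ) v)).toReal) :
    ∫ p in Set.Icc (0:ℝ) 1 ×ˢ Set.Icc (0:ℝ) 1, max (p.1 + p.2 - 1) 0 ∂μ
      = ∫ u in (0:ℝ)..1, C u (1 - u) := by
  set I : Set ℝ := Set.Icc (0:ℝ) 1 with hIdef
  have hImeas : MeasurableSet I := measurableSet_Icc
  -- marginal computations
  have hfst' : ∀ s : Set ℝ, MeasurableSet s → μ (Prod.fst ⁻¹' s) = volume (s ∩ I) := by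
    intro s hs
    rw [← Measure.map_apply measurable_fst hs, hfst, Measure.restrict_apply hs]
  have hsnd' : ∀ s : Set ℝ, MeasurableSet s → μ (Prod.snd ⁻¹' s) = volume (s ∩ I) := by
    intro s hs
    rw [← Measure.map_apply measurable_snd hs, hsnd, Measure.restrict_apply hs]
  -- μ is supported on the square
  have hsq : μ ((I ×ˢ I)ᶜ) = 0 := by
    have hsub : (I ×ˢ I)ᶜ ⊆ (Prod.fst ⁻¹' Iᶜ) ∪ (Prod.snd ⁻¹' Iᶜ) := by
      intro p hp
      simp only [Set.mem_compl_iff, Set.mem_prod, not_and_or] at hp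
      simpa using hp
    refine measure_mono_null hsub (measure_union_null ?_ ?_)
    · rw [hfst' _ hImeas.compl]; simp
    · rw [hsnd' _ hImeas.compl]; simp
  have hae : ∀ᵐ p ∂μ, p ∈ I ×ˢ I := MeasureTheory.mem_ae_iff.mpr hsq
  have hrestr : μ.restrict (I ×ˢ I) = μ := Measure.restrict_eq_self_of_ae_mem hae
  -- key measure identity
  have key : ∀ t ∈ I, μ {p : ℝ × ℝ | 1 - p.2 ≤ t ∧ t ≤ p.1}
      = μ (Set.Icc (0:ℝ) t ×ˢ Set.Icc (0:ℝ) (1 - t)) := by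
    intro t ht
    obtain ⟨ht0, ht1⟩ : (0:ℝ) ≤ t ∧ t ≤ 1 := ht
    set A : Set (ℝ × ℝ) := Prod.fst ⁻¹' Set.Ici t with hA
    set B : Set (ℝ × ℝ) := Prod.snd ⁻¹' Set.Ici (1 - t) with hB
    have hAmeas : MeasurableSet A := measurable_fst measurableSet_Ici
    have hBmeas : MeasurableSet B := measurable_snd measurableSet_Ici
    have hset : {p : ℝ × ℝ | 1 - p.2 ≤ t ∧ t ≤ p.1} = A ∩ B := by
      ext p
      simp only [Set.mem_setOf_eq, Set.mem_inter_iff, hA, hB, Set.mem_preimage, Set.mem_Ici]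
      constructor
      · rintro ⟨h1, h2⟩; exact ⟨h2, by linarith⟩
      · rintro ⟨h1, h2⟩; exact ⟨by linarith, h1⟩
    have hμA : μ A = ENNReal.ofReal (1 - t) := by
      rw [hA, hfst' _ measurableSet_Ici]
      have : Set.Ici t ∩ I = Set.Icc t 1 := by
        ext x
        simp only [Set.mem_inter_iff, Set.mem_Ici, hIdef, Set.mem_Icc]
        constructor
        · rintro ⟨h1, _, h3⟩; exact ⟨h1, h3⟩
        · rintro ⟨h1, h2⟩; exact ⟨h1, le_trans ht0 h1, h2⟩
      rw [this, Real.volume_Icc]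
    have hμBc : μ Bᶜ = ENNReal.ofReal (1 - t) := by
      have hBc : Bᶜ = Prod.snd ⁻¹' Set.Iio (1 - t) := by
        ext p
        simp only [hB, Set.mem_compl_iff, Set.mem_preimage, Set.mem_Ici, Set.mem_Iio, not_le]
      rw [hBc, hsnd' _ measurableSet_Iio]
      have : Set.Iio (1 - t) ∩ I = Set.Ico 0 (1 - t) := by
        ext x
        simp only [Set.mem_inter_iff, Set.mem_Iio, hIdef, Set.mem_Icc, Set.mem_Ico]
        constructor
        · rintro ⟨h1, h2, _⟩; exact ⟨h2, h1⟩
        · rintro ⟨h1, h2⟩; exact ⟨h2, h1, by linarith⟩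
      rw [this, Real.volume_Ico, sub_zero]
    have h1 : μ (A ∩ B) + μ (A \ B) = μ A := measure_inter_add_diff A hBmeas
    have h2 : μ (Bᶜ ∩ Aᶜ) + μ (A \ B) = μ Bᶜ := by
      have : Bᶜ \ Aᶜ = A \ B := by
        ext p; simp [Set.mem_diff]; tauto
      rw [← this]
      exact measure_inter_add_diff Bᶜ hAmeas.compl
    have hfin : μ (A \ B) ≠ ⊤ := (measure_lt_top μ _).ne
    have hcancel : μ (A ∩ B) = μ (Bᶜ ∩ Aᶜ) := by
      have := h1.trans (hμA.trans hμBc.symm |>.trans h2.symm)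
      exact (ENNReal.add_left_inj hfin).mp this
    -- now relate Bᶜ ∩ Aᶜ to the closed rectangle
    have hnull : μ ({p : ℝ × ℝ | p.1 = t} ∪ {p | p.2 = 1 - t} ∪ {p | p.1 < 0} ∪ {p | p.2 < 0})
        = 0 := by
      refine measure_union_null (measure_union_null (measure_union_null ?_ ?_) ?_) ?_
      · have : {p : ℝ × ℝ | p.1 = t} = Prod.fst ⁻¹' {t} := rfl
        rw [this, hfst' _ (measurableSet_singleton t)]
        exact measure_mono_null Set.inter_subset_left (Real.volume_singleton)
      · have : {p : ℝ × ℝ | p.2 = 1 - t} = Prod.snd ⁻¹' {1 - t} := rfl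
        rw [this, hsnd' _ (measurableSet_singleton _)]
        exact measure_mono_null Set.inter_subset_left (Real.volume_singleton)
      · have : {p : ℝ × ℝ | p.1 < 0} = Prod.fst ⁻¹' Set.Iio 0 := rfl
        rw [this, hfst' _ measurableSet_Iio]
        have : Set.Iio (0:ℝ) ∩ I = ∅ := by
          ext x; simp only [Set.mem_inter_iff, Set.mem_Iio, hIdef, Set.mem_Icc]
          simp; intro h1 h2; linarith
        rw [this]; simp
      · have : {p : ℝ × ℝ | p.2 < 0} = Prod.snd ⁻¹' Set.Iio 0 := rfl
        rw [this, hsnd' _ measurableSet_Iio]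
        have : Set.Iio (0:ℝ) ∩ I = ∅ := by
          ext x; simp only [Set.mem_inter_iff, Set.mem_Iio, hIdef, Set.mem_Icc]
          simp; intro h1 h2; linarith
        rw [this]; simp
    set N := {p : ℝ × ℝ | p.1 = t} ∪ {p | p.2 = 1 - t} ∪ {p | p.1 < 0} ∪ {p | p.2 < 0} with hN
    have heqrect : μ (Bᶜ ∩ Aᶜ) = μ (Set.Icc (0:ℝ) t ×ˢ Set.Icc (0:ℝ) (1 - t)) := by
      have hBA : Bᶜ ∩ Aᶜ = {p : ℝ × ℝ | p.1 < t ∧ p.2 < 1 - t} := by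
        ext p
        simp only [hA, hB, Set.mem_inter_iff, Set.mem_compl_iff, Set.mem_preimage, Set.mem_Ici,
          Set.mem_setOf_eq, not_le]
        tauto
      rw [hBA]
      apply le_antisymm
      · calc μ {p : ℝ × ℝ | p.1 < t ∧ p.2 < 1 - t}
            ≤ μ ((Set.Icc (0:ℝ) t ×ˢ Set.Icc (0:ℝ) (1 - t)) ∪ N) := by
              apply measure_mono
              intro p hp
              simp only [Set.mem_setOf_eq] at hp
              simp only [hN, Set.mem_union, Set.mem_setOf_eq, Set.mem_prod, Set.mem_Icc]
              rcases lt_or_ge p.1 0 with h1 | h1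
              · tauto
              rcases lt_or_ge p.2 0 with h2 | h2
              · tauto
              exact Or.inl ⟨⟨h1, hp.1.le⟩, h2, hp.2.le⟩
          _ ≤ μ (Set.Icc (0:ℝ) t ×ˢ Set.Icc (0:ℝ) (1 - t)) + μ N := measure_union_le _ _
          _ = μ (Set.Icc (0:ℝ) t ×ˢ Set.Icc (0:ℝ) (1 - t)) := by rw [hnull, add_zero]
      · calc μ (Set.Icc (0:ℝ) t ×ˢ Set.Icc (0:ℝ) (1 - t))
            ≤ μ ({p : ℝ × ℝ | p.1 < t ∧ p.2 < 1 - t} ∪ N) := by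
              apply measure_mono
              intro p hp
              simp only [Set.mem_prod, Set.mem_Icc] at hp
              simp only [hN, Set.mem_union, Set.mem_setOf_eq]
              by_cases h1 : p.1 = t
              · tauto
              by_cases h2 : p.2 = 1 - t
              · tauto
              exact Or.inl ⟨lt_of_le_of_ne hp.1.2 h1, lt_of_le_of_ne hp.2.2 h2⟩
          _ ≤ μ {p : ℝ × ℝ | p.1 < t ∧ p.2 < 1 - t} + μ N := measure_union_le _ _
          _ = μ {p : ℝ × ℝ | p.1 < t ∧ p.2 < 1 - t} := by rw [hnull, add_zero]
    rw [hset, hcancel, heqrect]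
  -- the indicator kernel
  set T : Set ((ℝ × ℝ) × ℝ) := {q | 1 - q.1.2 ≤ q.2 ∧ q.2 ≤ q.1.1} with hT
  have hTmeas : MeasurableSet T := by
    have h1 : MeasurableSet {q : (ℝ × ℝ) × ℝ | 1 - q.1.2 ≤ q.2} :=
      measurableSet_le (by fun_prop) (by fun_prop)
    have h2 : MeasurableSet {q : (ℝ × ℝ) × ℝ | q.2 ≤ q.1.1} :=
      measurableSet_le (by fun_prop) (by fun_prop)
    exact h1.inter h2
  set ν : Measure ℝ := volume.restrict I with hν
  -- LHS as lintegral
  have hg_cont : Continuous fun p : ℝ × ℝ => max (p.1 + p.2 - 1) 0 := by fun_prop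
  have hLHS : ∫ p in I ×ˢ I, max (p.1 + p.2 - 1) 0 ∂μ
      = (∫⁻ p, ENNReal.ofReal (max (p.1 + p.2 - 1) 0) ∂μ).toReal := by
    rw [hrestr]
    exact integral_eq_lintegral_of_nonneg_ae (Filter.Eventually.of_forall fun p => le_max_right _ _)
      hg_cont.aestronglyMeasurable
  -- rewrite integrand as lintegral over ν
  have hstep1 : ∫⁻ p, ENNReal.ofReal (max (p.1 + p.2 - 1) 0) ∂μ
      = ∫⁻ p, ∫⁻ t, T.indicator (fun _ => 1) (p, t) ∂ν ∂μ := by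
    refine lintegral_congr_ae (hae.mono fun p hp => ?_)
    obtain ⟨⟨hp1, hp2⟩, ⟨hp3, hp4⟩⟩ := hp
    show ENNReal.ofReal (max (p.1 + p.2 - 1) 0) = ∫⁻ t, T.indicator (fun _ => 1) (p, t) ∂ν
    have hind : (fun t => T.indicator (fun _ => (1:ENNReal)) (p, t))
        = (Set.Icc (1 - p.2) p.1).indicator (fun _ => 1) := by
      funext t
      simp only [Set.indicator_apply, hT, Set.mem_setOf_eq, Set.mem_Icc]
    have hlin : ∫⁻ t, T.indicator (fun _ => (1:ENNReal)) (p, t) ∂ν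
        = ν (Set.Icc (1 - p.2) p.1) := by
      rw [hind]; exact lintegral_indicator_one measurableSet_Icc
    rw [hlin, hν, Measure.restrict_apply measurableSet_Icc]
    have hsub : Set.Icc (1 - p.2) p.1 ∩ I = Set.Icc (1 - p.2) p.1 := by
      apply Set.inter_eq_self_of_subset_left
      intro x hx
      exact ⟨le_trans (by linarith) hx.1, le_trans hx.2 hp2⟩
    rw [hsub, Real.volume_Icc, ofReal_max_zero']
    congr 1
    ring
  -- swap
  have hswap : ∫⁻ p, ∫⁻ t, T.indicator (fun _ => 1) (p, t) ∂ν ∂μ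
      = ∫⁻ t, ∫⁻ p, T.indicator (fun _ => 1) (p, t) ∂μ ∂ν := by
    apply lintegral_lintegral_swap
    exact ((measurable_const.indicator hTmeas)).aemeasurable
  -- inner integral
  have hstep2 : ∀ t : ℝ, ∫⁻ p, T.indicator (fun _ => (1:ENNReal)) (p, t) ∂μ
      = μ {p : ℝ × ℝ | 1 - p.2 ≤ t ∧ t ≤ p.1} := by
    intro t
    have hind : (fun p : ℝ × ℝ => T.indicator (fun _ => (1:ENNReal)) (p, t))
        = ({p : ℝ × ℝ | 1 - p.2 ≤ t ∧ t ≤ p.1}).indicator (fun _ => 1) := by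
      funext p
      simp only [Set.indicator_apply, hT, Set.mem_setOf_eq]
    rw [hind]
    have h1 : MeasurableSet {p : ℝ × ℝ | 1 - p.2 ≤ t} :=
      measurableSet_le (by fun_prop) (by fun_prop)
    have h2 : MeasurableSet {p : ℝ × ℝ | t ≤ p.1} :=
      measurableSet_le (by fun_prop) (by fun_prop)
    exact lintegral_indicator_one (h1.inter h2)
  -- measurability of rectangle measure
  have hrectmeas : Measurable fun u : ℝ => μ (Set.Icc (0:ℝ) u ×ˢ Set.Icc (0:ℝ) (1 - u)) := by
    have hs : MeasurableSet {q : ℝ × (ℝ × ℝ) |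
        q.2 ∈ Set.Icc (0:ℝ) q.1 ×ˢ Set.Icc (0:ℝ) (1 - q.1)} := by
      have h1 : MeasurableSet {q : ℝ × (ℝ × ℝ) | 0 ≤ q.2.1} :=
      measurableSet_le (by fun_prop) (by fun_prop)
      have h2 : MeasurableSet {q : ℝ × (ℝ × ℝ) | q.2.1 ≤ q.1} :=
      measurableSet_le (by fun_prop) (by fun_prop)
      have h3 : MeasurableSet {q : ℝ × (ℝ × ℝ) | 0 ≤ q.2.2} :=
      measurableSet_le (by fun_prop) (by fun_prop)
      have h4 : MeasurableSet {q : ℝ × (ℝ × ℝ) | q.2.2 ≤ 1 - q.1} :=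
      measurableSet_le (by fun_prop) (by fun_prop)
      have : {q : ℝ × (ℝ × ℝ) | q.2 ∈ Set.Icc (0:ℝ) q.1 ×ˢ Set.Icc (0:ℝ) (1 - q.1)}
          = ({q : ℝ × (ℝ × ℝ) | 0 ≤ q.2.1} ∩ {q | q.2.1 ≤ q.1})
            ∩ ({q | 0 ≤ q.2.2} ∩ {q | q.2.2 ≤ 1 - q.1}) := by
        ext q
        simp only [Set.mem_setOf_eq, Set.mem_inter_iff, Set.mem_prod, Set.mem_Icc]
      rw [this]
      exact (h1.inter h2).inter (h3.inter h4)
    have heq : (fun u : ℝ => μ (Set.Icc (0:ℝ) u ×ˢ Set.Icc (0:ℝ) (1 - u)))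
        = fun u => μ (Prod.mk u ⁻¹' {q : ℝ × (ℝ × ℝ) |
            q.2 ∈ Set.Icc (0:ℝ) q.1 ×ˢ Set.Icc (0:ℝ) (1 - q.1)}) := by
      rfl
    rw [heq]
    exact measurable_measure_prodMk_left (ν := μ) hs
  -- RHS as lintegral
  have hRHS : ∫ u in (0:ℝ)..1, C u (1 - u)
      = (∫⁻ u in I, μ (Set.Icc (0:ℝ) u ×ˢ Set.Icc (0:ℝ) (1 - u)) ∂volume).toReal := by
    rw [intervalIntegral.integral_of_le zero_le_one]
    rw [← Measure.restrict_congr_set Ioc_ae_eq_Icc]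
    simp only [hC]
    exact integral_toReal (hrectmeas.aemeasurable.restrict)
      (Filter.Eventually.of_forall fun u => measure_lt_top μ _)
  rw [hLHS, hRHS, hstep1, hswap]
  congr 1
  rw [hν]
  refine setLIntegral_congr_fun hImeas (fun t ht => ?_)
  rw [hstep2 t, key t ht]
end

section
/- Let μ be a probability measure on [0,1]² both of whose coordinate marginals are the Lebesgue (uniform) measure on [0,1], and let C(u,v) = μ([0,u]×[0,v]) denote its distribution function. Then ∫_{[0,1]²} |1−u−v| dμ(u,v) = 2 ∫₀¹ C(u, 1−u) du. Consequently, 3 ∫_{[0,1]²} |1−u−v| dμ(u,v) − 1 = 6 ∫₀¹ C(u, 1−u) du − 1, i.e., the two representations of the W-footrule coefficient Φ_C coincide. -/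
open MeasureTheory

/-- If `μ` is a probability measure on `[0,1]²` whose coordinate marginals
are both the uniform (Lebesgue) measure on `[0,1]`, and `C(u,v) = μ([0,u]×[0,v])`, then
`∫_{[0,1]²} |1−u−v| dμ = 2 ∫₀¹ C(u, 1−u) du`, and consequently the two representations
of the W-footrule coefficient coincide:
`3 ∫_{[0,1]²} |1−u−v| dμ − 1 = 6 ∫₀¹ C(u, 1−u) du − 1`. -/
theorem abs_integral_eq_two_antidiagonal_integral
    (μ : Measure (ℝ × ℝ)) [IsProbabilityMeasure μ]
    (hfst : μ.map Prod.fst = volume.restrict (Set.Icc (0:ℝ) 1))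
    (hsnd : μ.map Prod.snd = volume.restrict (Set.Icc (0:ℝ) 1))
    (C : ℝ → ℝ → ℝ)
    (hC : ∀ u v : ℝ, C u v = (μ (Set.Icc (0:ℝ) u ×ˢ Set.Icc (0:ℝ) v)).toReal) :
    (∫ p in Set.Icc (0:ℝ) 1 ×ˢ Set.Icc (0:ℝ) 1, |1 - p.1 - p.2| ∂μ
        = 2 * ∫ u in (0:ℝ)..1, C u (1 - u)) ∧
    (3 * (∫ p in Set.Icc (0:ℝ) 1 ×ˢ Set.Icc (0:ℝ) 1, |1 - p.1 - p.2| ∂μ) - 1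
        = 6 * (∫ u in (0:ℝ)..1, C u (1 - u)) - 1) := by
  classical
  -- a.e. membership in the unit square
  have hmem : ∀ᵐ p ∂μ, p ∈ Set.Icc (0:ℝ) 1 ×ˢ Set.Icc (0:ℝ) 1 := by
    have h1 : μ (Prod.fst ⁻¹' (Set.Icc (0:ℝ) 1)ᶜ) = 0 := by
      rw [← Measure.map_apply measurable_fst measurableSet_Icc.compl, hfst,
        Measure.restrict_apply measurableSet_Icc.compl]
      simp
    have h2 : μ (Prod.snd ⁻¹' (Set.Icc (0:ℝ) 1)ᶜ) = 0 := by
      rw [← Measure.map_apply measurable_snd measurableSet_Icc.compl, hsnd,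
        Measure.restrict_apply measurableSet_Icc.compl]
      simp
    have hcompl : μ ((Set.Icc (0:ℝ) 1 ×ˢ Set.Icc (0:ℝ) 1)ᶜ) = 0 := by
      refine measure_mono_null ?_ (measure_union_null h1 h2)
      intro p hp
      simp only [Set.mem_compl_iff, Set.mem_prod, not_and_or] at hp
      rcases hp with hp | hp
      · exact Or.inl hp
      · exact Or.inr hp
    exact (MeasureTheory.ae_iff).2 hcompl
  have hres : μ.restrict (Set.Icc (0:ℝ) 1 ×ˢ Set.Icc (0:ℝ) 1) = μ :=
    Measure.restrict_eq_self_of_ae_mem hmem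
  -- integrability of the coordinates
  have hid_int : IntegrableOn (fun x : ℝ => x) (Set.Icc (0:ℝ) 1) volume :=
    continuous_id.integrableOn_Icc
  have hX : Integrable (fun p : ℝ × ℝ => p.1) μ := by
    have := (integrable_map_measure aestronglyMeasurable_id
      measurable_fst.aemeasurable (μ := μ) (f := Prod.fst)).1
    rw [hfst] at this
    exact this hid_int
  have hY : Integrable (fun p : ℝ × ℝ => p.2) μ := by
    have := (integrable_map_measure aestronglyMeasurable_id
      measurable_snd.aemeasurable (μ := μ) (f := Prod.snd)).1
    rw [hsnd] at this
    exact this hid_int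
  -- expectations of coordinates
  have hIcc_int : ∫ x in Set.Icc (0:ℝ) 1, x = 1 / 2 := by
    rw [MeasureTheory.integral_Icc_eq_integral_Ioc,
      ← intervalIntegral.integral_of_le zero_le_one, integral_id]
    norm_num
  have hEX : ∫ p, p.1 ∂μ = 1 / 2 := by
    have := integral_map (μ := μ) (φ := Prod.fst) measurable_fst.aemeasurable
      (f := fun x : ℝ => x) aestronglyMeasurable_id
    rw [hfst, hIcc_int] at this
    exact this.symm
  have hEY : ∫ p, p.2 ∂μ = 1 / 2 := by
    have := integral_map (μ := μ) (φ := Prod.snd) measurable_snd.aemeasurable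
      (f := fun x : ℝ => x) aestronglyMeasurable_id
    rw [hsnd, hIcc_int] at this
    exact this.symm
  -- Fubini for the region under the antidiagonal
  set T : Set (ℝ × (ℝ × ℝ)) :=
    {q | 0 ≤ q.2.1 ∧ q.2.1 ≤ q.1 ∧ 0 ≤ q.2.2 ∧ q.2.2 ≤ 1 - q.1} with hT
  have hTm : MeasurableSet T := by
    apply MeasurableSet.inter
    · exact measurableSet_le measurable_const (measurable_fst.comp measurable_snd)
    apply MeasurableSet.inter
    · exact measurableSet_le (measurable_fst.comp measurable_snd) measurable_fst
    apply MeasurableSet.inter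
    · exact measurableSet_le measurable_const (measurable_snd.comp measurable_snd)
    · exact measurableSet_le (measurable_snd.comp measurable_snd)
        (measurable_const.sub measurable_fst)
  have hpre : ∀ u : ℝ, Prod.mk u ⁻¹' T = Set.Icc (0:ℝ) u ×ˢ Set.Icc (0:ℝ) (1 - u) := by
    intro u
    ext p
    simp only [hT, Set.mem_preimage, Set.mem_setOf_eq, Set.mem_prod, Set.mem_Icc]
    tauto
  set ν : Measure ℝ := volume.restrict (Set.Icc (0:ℝ) 1) with hν
  have h_left : (ν.prod μ) T
      = ∫⁻ u in Set.Icc (0:ℝ) 1, μ (Set.Icc (0:ℝ) u ×ˢ Set.Icc (0:ℝ) (1 - u)) := by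
    rw [Measure.prod_apply hTm]
    simp_rw [hpre]
    rfl
  have h_right : (ν.prod μ) T = ∫⁻ p, ENNReal.ofReal (1 - p.1 - p.2) ∂μ := by
    rw [Measure.prod_apply_symm hTm]
    refine lintegral_congr_ae ?_
    filter_upwards [hmem] with p hp
    obtain ⟨⟨h01, h11⟩, h02, h12⟩ := hp
    have hset : (fun u : ℝ => (u, p)) ⁻¹' T = Set.Icc p.1 (1 - p.2) := by
      ext u
      simp only [hT, Set.mem_preimage, Set.mem_setOf_eq, Set.mem_Icc]
      constructor
      · rintro ⟨_, h2, _, h4⟩; exact ⟨h2, by linarith⟩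
      · rintro ⟨h2, h4⟩; exact ⟨h01, h2, h02, by linarith⟩
    rw [hset, hν, Measure.restrict_apply measurableSet_Icc, Set.Icc_inter_Icc,
      max_eq_left h01, min_eq_left (by linarith : 1 - p.2 ≤ 1), Real.volume_Icc]
    congr 1
    ring
  have hkey : ∫⁻ u in Set.Icc (0:ℝ) 1, μ (Set.Icc (0:ℝ) u ×ˢ Set.Icc (0:ℝ) (1 - u))
      = ∫⁻ p, ENNReal.ofReal (1 - p.1 - p.2) ∂μ := h_left.symm.trans h_right
  -- the C-integral as a lintegral
  have hg_meas : Measurable (fun u : ℝ => μ (Set.Icc (0:ℝ) u ×ˢ Set.Icc (0:ℝ) (1 - u))) := by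
    have := measurable_measure_prodMk_left (ν := μ) hTm
    simpa [hpre] using this
  have hCint : ∫ u in (0:ℝ)..1, C u (1 - u)
      = (∫⁻ u in Set.Icc (0:ℝ) 1,
          μ (Set.Icc (0:ℝ) u ×ˢ Set.Icc (0:ℝ) (1 - u))).toReal := by
    rw [intervalIntegral.integral_of_le zero_le_one,
      ← MeasureTheory.integral_Icc_eq_integral_Ioc]
    simp_rw [hC]
    exact integral_toReal hg_meas.aemeasurable
      (Filter.Eventually.of_forall fun u => measure_lt_top μ _)
  -- the positive part as a lintegral
  set M : ℝ × ℝ → ℝ := fun p => max (1 - p.1 - p.2) 0 with hM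
  have hM_meas : Measurable M :=
    ((measurable_const.sub measurable_fst).sub measurable_snd).max measurable_const
  have hM_int : Integrable M μ := by
    refine (integrable_const (1:ℝ)).mono' hM_meas.aestronglyMeasurable ?_
    filter_upwards [hmem] with p hp
    obtain ⟨⟨h01, h11⟩, h02, h12⟩ := hp
    rw [Real.norm_eq_abs, abs_le]
    constructor
    · have := le_max_right (1 - p.1 - p.2) 0; linarith
    · exact max_le (by linarith) (by linarith)
  have hM_eq : ∫ p, M p ∂μ = (∫⁻ p, ENNReal.ofReal (1 - p.1 - p.2) ∂μ).toReal := by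
    rw [integral_eq_lintegral_of_nonneg_ae
      (Filter.Eventually.of_forall fun p : ℝ × ℝ => le_max_right (1 - p.1 - p.2) 0)
      hM_meas.aestronglyMeasurable]
    congr 1
    refine lintegral_congr fun p => ?_
    rcases le_total (1 - p.1 - p.2) 0 with h | h
    · simp [hM, max_eq_right h, ENNReal.ofReal_of_nonpos h]
    · simp [hM, max_eq_left h]
  -- the absolute value identity
  have hlin_int : Integrable (fun p : ℝ × ℝ => 1 - p.1 - p.2) μ :=
    ((integrable_const (1:ℝ)).sub hX).sub hY
  have hA : Integrable (fun p : ℝ × ℝ => 1 - p.1) μ := (integrable_const (1:ℝ)).sub hX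
  have h0 : ∫ p, (1 - p.1 - p.2) ∂μ = 0 := by
    rw [integral_sub hA hY, integral_sub (integrable_const (1:ℝ)) hX, hEX, hEY, integral_const]
    simp
    norm_num
  have habs : ∫ p, |1 - p.1 - p.2| ∂μ = 2 * ∫ p, M p ∂μ := by
    have hpt : ∀ p : ℝ × ℝ, |1 - p.1 - p.2| = 2 * M p - (1 - p.1 - p.2) := by
      intro p
      rcases le_total (1 - p.1 - p.2) 0 with h | h
      · rw [abs_of_nonpos h, hM]; simp only [max_eq_right h]; ring
      · rw [abs_of_nonneg h, hM]; simp only [max_eq_left h]; ring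
    have h2M : Integrable (fun p : ℝ × ℝ => 2 * M p) μ := hM_int.const_mul 2
    simp_rw [hpt]
    rw [integral_sub h2M hlin_int, h0, integral_const_mul]
    ring
  have hmain : ∫ p in Set.Icc (0:ℝ) 1 ×ˢ Set.Icc (0:ℝ) 1, |1 - p.1 - p.2| ∂μ
      = 2 * ∫ u in (0:ℝ)..1, C u (1 - u) := by
    rw [hres, habs, hM_eq, hCint, hkey]
  exact ⟨hmain, by rw [hmain]; ring⟩
end

section
/- Let C be a bivariate copula. Then Φ_C = −1 if and only if C(u,v) = W(u,v) = max(u+v−1, 0) for all (u,v) ∈ [0,1]². -/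
open MeasureTheory

/-- A bivariate copula: a function `C : [0,1]² → [0,1]` with the standard boundary
conditions and the 2-increasing property. -/
def IsCopula (C : ℝ → ℝ → ℝ) : Prop :=
  (∀ u ∈ Set.Icc (0:ℝ) 1, ∀ v ∈ Set.Icc (0:ℝ) 1, C u v ∈ Set.Icc (0:ℝ) 1) ∧
  (∀ u ∈ Set.Icc (0:ℝ) 1, C u 0 = 0) ∧
  (∀ v ∈ Set.Icc (0:ℝ) 1, C 0 v = 0) ∧
  (∀ u ∈ Set.Icc (0:ℝ) 1, C u 1 = u) ∧
  (∀ v ∈ Set.Icc (0:ℝ) 1, C 1 v = v) ∧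
  (∀ u₁ u₂ v₁ v₂ : ℝ, 0 ≤ u₁ → u₁ ≤ u₂ → u₂ ≤ 1 → 0 ≤ v₁ → v₁ ≤ v₂ → v₂ ≤ 1 →
    0 ≤ C u₂ v₂ - C u₁ v₂ - C u₂ v₁ + C u₁ v₁)

/-- The W-footrule coefficient of a copula: `Φ_C = 6 ∫₀¹ C(u,1−u) du − 1`. -/
noncomputable def WFootrule (C : ℝ → ℝ → ℝ) : ℝ :=
  6 * (∫ u in (0:ℝ)..1, C u (1 - u)) - 1

/-- A nonnegative function on `[0,1]`, continuous on `[0,1]`, whose integral over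
`[0,1]` is zero, vanishes on `[0,1]`. -/
lemma eq_zero_of_integral_eq_zero (f : ℝ → ℝ) (hcont : ContinuousOn f (Set.Icc 0 1))
    (hnn : ∀ x ∈ Set.Icc (0:ℝ) 1, 0 ≤ f x) (hzero : (∫ u in (0:ℝ)..1, f u) = 0) :
    ∀ x ∈ Set.Icc (0:ℝ) 1, f x = 0 := by
  intro x₀ hx₀
  by_contra hne
  have hc : 0 < f x₀ := lt_of_le_of_ne (hnn x₀ hx₀) (Ne.symm hne)
  have hctw : ContinuousWithinAt f (Set.Icc 0 1) x₀ := hcont x₀ hx₀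
  rw [Metric.continuousWithinAt_iff] at hctw
  obtain ⟨δ, hδ, hδ'⟩ := hctw (f x₀ / 2) (by linarith)
  set a : ℝ := max 0 (x₀ - δ/2) with ha
  set b : ℝ := min 1 (x₀ + δ/2) with hb
  obtain ⟨hx₀0, hx₀1⟩ := hx₀
  have hab : a < b := by
    rw [ha, hb, max_lt_iff, lt_min_iff, lt_min_iff]
    refine ⟨⟨zero_lt_one, by linarith⟩, ⟨by linarith, by linarith⟩⟩
  have ha0 : 0 ≤ a := le_max_left _ _
  have hb1 : b ≤ 1 := min_le_left _ _
  have hsub : Set.Icc a b ⊆ Set.Icc 0 1 := Set.Icc_subset_Icc ha0 hb1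
  have hclose : ∀ x ∈ Set.Icc a b, f x₀ / 2 ≤ f x := by
    intro x hx
    have h1 : x₀ - δ/2 ≤ x := le_trans (le_max_right _ _) hx.1
    have h2 : x ≤ x₀ + δ/2 := le_trans hx.2 (min_le_right _ _)
    have hdist : dist x x₀ < δ := by
      rw [Real.dist_eq, abs_lt]; constructor <;> linarith
    have := hδ' (hsub hx) hdist
    rw [Real.dist_eq, abs_lt] at this
    linarith [this.1]
  -- integrability
  have hint : ∀ c d : ℝ, 0 ≤ c → c ≤ d → d ≤ 1 → IntervalIntegrable f volume c d := by
    intro c d hc0 hcd hd1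
    apply ContinuousOn.intervalIntegrable
    apply hcont.mono
    rw [Set.uIcc_of_le hcd]
    exact Set.Icc_subset_Icc hc0 hd1
  have hIab : IntervalIntegrable f volume a b := hint a b ha0 hab.le hb1
  have hI0a : IntervalIntegrable f volume 0 a := hint 0 a le_rfl ha0 (by linarith)
  have hIb1 : IntervalIntegrable f volume b 1 := hint b 1 (by linarith) hb1 le_rfl
  have hsplit : (∫ u in (0:ℝ)..1, f u) =
      (∫ u in (0:ℝ)..a, f u) + (∫ u in a..b, f u) + (∫ u in b..(1:ℝ), f u) := by
    rw [intervalIntegral.integral_add_adjacent_intervals hI0a hIab,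
      intervalIntegral.integral_add_adjacent_intervals (hI0a.trans hIab) hIb1]
  have h1 : 0 ≤ ∫ u in (0:ℝ)..a, f u := by
    apply intervalIntegral.integral_nonneg ha0
    intro x hx; exact hnn x (Set.Icc_subset_Icc le_rfl (by linarith) hx)
  have h3 : 0 ≤ ∫ u in b..(1:ℝ), f u := by
    apply intervalIntegral.integral_nonneg hb1
    intro x hx; exact hnn x (Set.Icc_subset_Icc (by linarith) le_rfl hx)
  have h2 : f x₀ / 2 * (b - a) ≤ ∫ u in a..b, f u := by
    have := intervalIntegral.integral_mono_on hab.le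
      (intervalIntegrable_const (c := f x₀ / 2)) hIab hclose
    rwa [intervalIntegral.integral_const, smul_eq_mul, mul_comm] at this
  have hpos : 0 < f x₀ / 2 * (b - a) := by
    apply mul_pos (by linarith) (by linarith)
  rw [hsplit] at hzero
  linarith

/-- For a bivariate copula `C`, `Φ_C = −1` iff `C = W`, the
countermonotonic copula `W(u,v) = max(u+v−1, 0)`. -/
theorem WFootrule_eq_neg_one_iff (C : ℝ → ℝ → ℝ) (hC : IsCopula C) :
    WFootrule C = -1 ↔
      ∀ u ∈ Set.Icc (0:ℝ) 1, ∀ v ∈ Set.Icc (0:ℝ) 1, C u v = max (u + v - 1) 0 := by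
  obtain ⟨hrange, hu0, h0v, hu1, h1v, h2inc⟩ := hC
  -- monotonicity in second variable
  have hmono2 : ∀ u ∈ Set.Icc (0:ℝ) 1, ∀ v₁ v₂ : ℝ, 0 ≤ v₁ → v₁ ≤ v₂ → v₂ ≤ 1 →
      C u v₁ ≤ C u v₂ := by
    intro u hu v₁ v₂ h1 h12 h21
    have := h2inc 0 u v₁ v₂ le_rfl hu.1 hu.2 h1 h12 h21
    rw [h0v v₁ ⟨h1, by linarith⟩, h0v v₂ ⟨by linarith, h21⟩] at this
    linarith
  -- Lipschitz-type bounds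
  have hlip1 : ∀ u₁ u₂ : ℝ, 0 ≤ u₁ → u₁ ≤ u₂ → u₂ ≤ 1 → ∀ v ∈ Set.Icc (0:ℝ) 1,
      0 ≤ C u₂ v - C u₁ v ∧ C u₂ v - C u₁ v ≤ u₂ - u₁ := by
    intro u₁ u₂ h1 h12 h21 v hv
    have hl := h2inc u₁ u₂ 0 v h1 h12 h21 le_rfl hv.1 hv.2
    have hr := h2inc u₁ u₂ v 1 h1 h12 h21 hv.1 hv.2 le_rfl
    rw [hu0 u₁ ⟨h1, by linarith⟩, hu0 u₂ ⟨by linarith, h21⟩] at hl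
    rw [hu1 u₁ ⟨h1, by linarith⟩, hu1 u₂ ⟨by linarith, h21⟩] at hr
    constructor <;> linarith
  have hlip2 : ∀ v₁ v₂ : ℝ, 0 ≤ v₁ → v₁ ≤ v₂ → v₂ ≤ 1 → ∀ u ∈ Set.Icc (0:ℝ) 1,
      0 ≤ C u v₂ - C u v₁ ∧ C u v₂ - C u v₁ ≤ v₂ - v₁ := by
    intro v₁ v₂ h1 h12 h21 u hu
    have hl := h2inc 0 u v₁ v₂ le_rfl hu.1 hu.2 h1 h12 h21
    have hr := h2inc u 1 v₁ v₂ hu.1 hu.2 le_rfl h1 h12 h21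
    rw [h0v v₁ ⟨h1, by linarith⟩, h0v v₂ ⟨by linarith, h21⟩] at hl
    rw [h1v v₁ ⟨h1, by linarith⟩, h1v v₂ ⟨by linarith, h21⟩] at hr
    constructor <;> linarith
  set f : ℝ → ℝ := fun u => C u (1 - u) with hf
  have hfnn : ∀ x ∈ Set.Icc (0:ℝ) 1, 0 ≤ f x := by
    intro x hx
    exact (hrange x hx (1 - x) ⟨by linarith [hx.2], by linarith [hx.1]⟩).1
  have hfcont : ContinuousOn f (Set.Icc 0 1) := by
    apply LipschitzOnWith.continuousOn (K := 2)
    apply LipschitzOnWith.of_dist_le_mul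
    intro x hx y hy
    rcases le_total y x with hxy | hxy
    · have h1 := hlip1 y x hy.1 hxy hx.2 (1 - x) ⟨by linarith [hx.2], by linarith [hx.1]⟩
      have h2 := hlip2 (1 - x) (1 - y) (by linarith [hx.2]) (by linarith) (by linarith [hy.1])
        y hy
      rw [Real.dist_eq, Real.dist_eq, abs_le]
      have hax : |x - y| = x - y := abs_of_nonneg (by linarith)
      rw [hax]
      push_cast
      constructor <;> simp only [hf] <;> linarith [h1.1, h1.2, h2.1, h2.2]
    · have h1 := hlip1 x y hx.1 hxy hy.2 (1 - y) ⟨by linarith [hy.2], by linarith [hy.1]⟩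
      have h2 := hlip2 (1 - y) (1 - x) (by linarith [hy.2]) (by linarith) (by linarith [hx.1])
        x hx
      rw [Real.dist_eq, Real.dist_eq, abs_le]
      have hax : |x - y| = y - x := by rw [abs_of_nonpos (by linarith)]; ring
      rw [hax]
      push_cast
      constructor <;> simp only [hf] <;> linarith [h1.1, h1.2, h2.1, h2.2]
  constructor
  · intro hΦ
    have hint : (∫ u in (0:ℝ)..1, f u) = 0 := by
      unfold WFootrule at hΦ
      simp only [hf]
      linarith
    have hkey : ∀ x ∈ Set.Icc (0:ℝ) 1, C x (1 - x) = 0 :=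
      eq_zero_of_integral_eq_zero f hfcont hfnn hint
    intro u hu v hv
    rcases le_total (u + v) 1 with hle | hge
    · -- C u v = 0
      rw [max_eq_right (by linarith)]
      have h1 : C u v ≤ C u (1 - u) := hmono2 u hu v (1 - u) hv.1 (by linarith) (by linarith [hu.1])
      have h2 : 0 ≤ C u v := (hrange u hu v hv).1
      have h3 := hkey u hu
      linarith
    · rw [max_eq_left (by linarith)]
      -- lower bound
      have hl := h2inc u 1 v 1 hu.1 hu.2 le_rfl hv.1 hv.2 le_rfl
      rw [hu1 u hu, h1v v hv, h1v 1 ⟨zero_le_one, le_rfl⟩] at hl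
      -- upper bound using C (1-v) v = 0
      have h1vmem : (1 - v) ∈ Set.Icc (0:ℝ) 1 := ⟨by linarith [hv.2], by linarith [hv.1]⟩
      have hz : C (1 - v) v = 0 := by
        have := hkey (1 - v) h1vmem
        simpa using this
      have hup := h2inc (1 - v) u v 1 h1vmem.1 (by linarith) hu.2 hv.1 hv.2 le_rfl
      rw [hu1 u hu, hu1 (1 - v) h1vmem, hz] at hup
      linarith
  · intro hW
    have : (∫ u in (0:ℝ)..1, C u (1 - u)) = ∫ u in (0:ℝ)..1, (0:ℝ) := by
      apply intervalIntegral.integral_congr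
      intro x hx
      rw [Set.uIcc_of_le zero_le_one] at hx
      have := hW x hx (1 - x) ⟨by linarith [hx.2], by linarith [hx.1]⟩
      simpa using this
    unfold WFootrule
    rw [this]
    simp
end

section
/- Define C : [0,1]² → [0,1] by C(u,v) = max{1/2, u+v−1} if (u,v) ∈ [1/2,1]², and C(u,v) = min{u,v} otherwise. Then C is a bivariate copula, Φ_C = 1/2, and C ≠ M where M(u,v) = min{u,v}. In particular, Φ_C = 1/2 does not imply C = M. -/
open MeasureTheory

open intervalIntegral in
lemma min_int_aux : (∫ u in (0:ℝ)..1, min u (1 - u)) = 1/4 := by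
  have hi : ∀ a b : ℝ, IntervalIntegrable (fun u => min u (1-u)) volume a b :=
    fun a b => (Continuous.min continuous_id (by continuity)).intervalIntegrable _ _
  have h1 : (∫ u in (0:ℝ)..(1/2), min u (1 - u)) = 1/8 := by
    rw [intervalIntegral.integral_congr (g := fun u => u)]
    · rw [integral_id]; norm_num
    · intro x hx
      rw [Set.uIcc_of_le (by norm_num)] at hx
      exact min_eq_left (by simp at hx; linarith [hx.1, hx.2])
  have h2 : (∫ u in (1/2:ℝ)..1, min u (1 - u)) = 1/8 := by
    rw [intervalIntegral.integral_congr (g := fun u => 1 - u)]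
    · rw [integral_sub intervalIntegrable_const intervalIntegrable_id,
        intervalIntegral.integral_const, integral_id]
      norm_num
    · intro x hx
      rw [Set.uIcc_of_le (by norm_num)] at hx
      exact min_eq_right (by simp at hx; linarith [hx.1, hx.2])
  have h3 := intervalIntegral.integral_add_adjacent_intervals (hi 0 (1/2)) (hi (1/2) 1)
  rw [h1, h2] at h3
  rw [← h3]; norm_num

set_option maxHeartbeats 1000000 in
lemma two_inc_aux (u₁ u₂ v₁ v₂ : ℝ) (h1 : 0 ≤ u₁) (h2 : u₁ ≤ u₂) (h3 : u₂ ≤ 1)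
    (h4 : 0 ≤ v₁) (h5 : v₁ ≤ v₂) (h6 : v₂ ≤ 1) :
    0 ≤ (if (1/2 ≤ u₂ ∧ u₂ ≤ 1) ∧ (1/2 ≤ v₂ ∧ v₂ ≤ 1)
          then max (1/2:ℝ) (u₂ + v₂ - 1) else min u₂ v₂)
      - (if (1/2 ≤ u₁ ∧ u₁ ≤ 1) ∧ (1/2 ≤ v₂ ∧ v₂ ≤ 1)
          then max (1/2:ℝ) (u₁ + v₂ - 1) else min u₁ v₂)
      - (if (1/2 ≤ u₂ ∧ u₂ ≤ 1) ∧ (1/2 ≤ v₁ ∧ v₁ ≤ 1)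
          then max (1/2:ℝ) (u₂ + v₁ - 1) else min u₂ v₁)
      + (if (1/2 ≤ u₁ ∧ u₁ ≤ 1) ∧ (1/2 ≤ v₁ ∧ v₁ ≤ 1)
          then max (1/2:ℝ) (u₁ + v₁ - 1) else min u₁ v₁) := by
  have hu1 : u₁ ≤ 1 := le_trans h2 h3
  have hv1 : v₁ ≤ 1 := le_trans h5 h6
  rcases le_or_gt (1/2:ℝ) u₁ with ha1 | ha1 <;>
    rcases le_or_gt (1/2:ℝ) u₂ with ha2 | ha2 <;>
    rcases le_or_gt (1/2:ℝ) v₁ with hb1 | hb1 <;>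
    rcases le_or_gt (1/2:ℝ) v₂ with hb2 | hb2
  all_goals try (exfalso; linarith)
  -- TTTT
  · rw [if_pos ⟨⟨ha2, h3⟩, hb2, h6⟩, if_pos ⟨⟨ha1, hu1⟩, hb2, h6⟩,
      if_pos ⟨⟨ha2, h3⟩, hb1, hv1⟩, if_pos ⟨⟨ha1, hu1⟩, hb1, hv1⟩]
    simp only [max_def]; split_ifs <;> linarith
  -- TTFT
  · rw [if_pos ⟨⟨ha2, h3⟩, hb2, h6⟩, if_pos ⟨⟨ha1, hu1⟩, hb2, h6⟩,
      if_neg (fun h => absurd h.2.1 (not_le.mpr hb1)),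
      if_neg (fun h => absurd h.2.1 (not_le.mpr hb1))]
    simp only [min_def, max_def]; split_ifs <;> linarith
  -- TTFF
  · rw [if_neg (fun h => absurd h.2.1 (not_le.mpr hb2)),
      if_neg (fun h => absurd h.2.1 (not_le.mpr hb2)),
      if_neg (fun h => absurd h.2.1 (not_le.mpr hb1)),
      if_neg (fun h => absurd h.2.1 (not_le.mpr hb1))]
    simp only [min_def]; split_ifs <;> linarith
  -- FTTT
  · rw [if_pos ⟨⟨ha2, h3⟩, hb2, h6⟩,
      if_neg (fun h => absurd h.1.1 (not_le.mpr ha1)),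
      if_pos ⟨⟨ha2, h3⟩, hb1, hv1⟩,
      if_neg (fun h => absurd h.1.1 (not_le.mpr ha1))]
    simp only [min_def, max_def]; split_ifs <;> linarith
  -- FTFT
  · rw [if_pos ⟨⟨ha2, h3⟩, hb2, h6⟩,
      if_neg (fun h => absurd h.1.1 (not_le.mpr ha1)),
      if_neg (fun h => absurd h.2.1 (not_le.mpr hb1)),
      if_neg (fun h => absurd h.1.1 (not_le.mpr ha1))]
    simp only [min_def, max_def]; split_ifs <;> linarith
  -- FTFF
  · rw [if_neg (fun h => absurd h.2.1 (not_le.mpr hb2)),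
      if_neg (fun h => absurd h.1.1 (not_le.mpr ha1)),
      if_neg (fun h => absurd h.2.1 (not_le.mpr hb1)),
      if_neg (fun h => absurd h.1.1 (not_le.mpr ha1))]
    simp only [min_def]; split_ifs <;> linarith
  -- FFTT
  · rw [if_neg (fun h => absurd h.1.1 (not_le.mpr ha2)),
      if_neg (fun h => absurd h.1.1 (not_le.mpr ha1)),
      if_neg (fun h => absurd h.1.1 (not_le.mpr ha2)),
      if_neg (fun h => absurd h.1.1 (not_le.mpr ha1))]
    simp only [min_def]; split_ifs <;> linarith
  -- FFFT
  · rw [if_neg (fun h => absurd h.1.1 (not_le.mpr ha2)),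
      if_neg (fun h => absurd h.1.1 (not_le.mpr ha1)),
      if_neg (fun h => absurd h.1.1 (not_le.mpr ha2)),
      if_neg (fun h => absurd h.1.1 (not_le.mpr ha1))]
    simp only [min_def]; split_ifs <;> linarith
  -- FFFF
  · rw [if_neg (fun h => absurd h.1.1 (not_le.mpr ha2)),
      if_neg (fun h => absurd h.1.1 (not_le.mpr ha1)),
      if_neg (fun h => absurd h.1.1 (not_le.mpr ha2)),
      if_neg (fun h => absurd h.1.1 (not_le.mpr ha1))]
    simp only [min_def]; split_ifs <;> linarith

/-- The copula equal to `max{1/2, u+v−1}` on `[1/2,1]²` and to `min{u,v}`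
elsewhere is indeed a copula, it satisfies `Φ_C = 1/2`, yet it differs from the
comonotonic copula `M(u,v) = min{u,v}`. In particular, `Φ_C = 1/2` does not imply
`C = M`. -/
theorem WFootrule_eq_half_not_imp_M :
    IsCopula (fun u v => if u ∈ Set.Icc (1/2 : ℝ) 1 ∧ v ∈ Set.Icc (1/2 : ℝ) 1
        then max (1/2) (u + v - 1) else min u v) ∧
    WFootrule (fun u v => if u ∈ Set.Icc (1/2 : ℝ) 1 ∧ v ∈ Set.Icc (1/2 : ℝ) 1
        then max (1/2) (u + v - 1) else min u v) = 1/2 ∧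
    ¬ (∀ u ∈ Set.Icc (0:ℝ) 1, ∀ v ∈ Set.Icc (0:ℝ) 1,
        (if u ∈ Set.Icc (1/2 : ℝ) 1 ∧ v ∈ Set.Icc (1/2 : ℝ) 1
          then max (1/2) (u + v - 1) else min u v) = min u v) := by
  refine ⟨⟨?_, ?_, ?_, ?_, ?_, ?_⟩, ?_, ?_⟩
  · -- range
    intro u hu v hv
    simp only [Set.mem_Icc] at *
    split_ifs with h
    · constructor
      · exact le_trans (by norm_num) (le_max_left _ _)
      · exact max_le (by norm_num) (by linarith [hu.2, hv.2])
    · constructor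
      · exact le_min hu.1 hv.1
      · exact le_trans (min_le_left _ _) hu.2
  · -- C u 0 = 0
    intro u hu
    simp only [Set.mem_Icc] at hu ⊢
    rw [if_neg (by intro h; norm_num at h), min_eq_right hu.1]
  · -- C 0 v = 0
    intro v hv
    simp only [Set.mem_Icc] at hv ⊢
    rw [if_neg (by intro h; norm_num at h), min_eq_left hv.1]
  · -- C u 1 = u
    intro u hu
    simp only [Set.mem_Icc] at hu ⊢
    split_ifs with h
    · rw [max_eq_right (by linarith [h.1.1])]; ring
    · exact min_eq_left hu.2
  · -- C 1 v = v
    intro v hv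
    simp only [Set.mem_Icc] at hv ⊢
    split_ifs with h
    · rw [max_eq_right (by linarith [h.2.1])]; ring
    · exact min_eq_right hv.2
  · -- 2-increasing
    intro u₁ u₂ v₁ v₂ h1 h2 h3 h4 h5 h6
    simpa only [Set.mem_Icc] using two_inc_aux u₁ u₂ v₁ v₂ h1 h2 h3 h4 h5 h6
  · -- WFootrule = 1/2
    unfold WFootrule
    have heq : ∀ u : ℝ,
        (if u ∈ Set.Icc (1/2 : ℝ) 1 ∧ (1-u) ∈ Set.Icc (1/2 : ℝ) 1
          then max (1/2:ℝ) (u + (1-u) - 1) else min u (1-u)) = min u (1-u) := by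
      intro u
      split_ifs with h
      · simp only [Set.mem_Icc] at h
        have hu : u = 1/2 := le_antisymm (by linarith [h.2.1]) h.1.1
        subst hu; norm_num
      · rfl
    simp only [heq]
    rw [min_int_aux]
    norm_num
  · -- not M
    intro h
    have := h (3/4) (by norm_num) (3/4) (by norm_num)
    norm_num [Set.mem_Icc] at this
end

section
/- (Sheppard's orthant probability formula.) Let ρ ∈ (−1,1) and let φ_ρ(x,y) = (1/(2π√(1−ρ²))) exp(−(x² − 2ρxy + y²)/(2(1−ρ²))) be the standardized bivariate normal density with correlation ρ. Then ∫_{−∞}^0 ∫_{−∞}^0 φ_ρ(x,y) dx dy = 1/4 + arcsin(ρ)/(2π). -/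
open MeasureTheory Real Set Filter

private lemma gauss_Iic (b : ℝ) :
    ∫ x in Iic (0:ℝ), Real.exp (-b * x^2) = Real.sqrt (π/b) / 2 := by
  have h := integral_comp_neg_Iic (0:ℝ) (fun x => Real.exp (-b * x^2))
  simp only [neg_sq, neg_zero] at h
  rw [h, integral_gaussian_Ioi]

private lemma translate_Iic (f : ℝ → ℝ) (a c : ℝ) :
    ∫ x in Iic c, f (x - a) = ∫ x in Iic (c - a), f x := by
  have A : MeasurableEmbedding (fun x : ℝ => x - a) :=
    (Homeomorph.subRight a).measurableEmbedding
  have key := A.setIntegral_map (μ := volume) f (Iic (c - a))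
  have hmap : Measure.map (fun x : ℝ => x - a) volume = volume := by
    simp_rw [sub_eq_add_neg]
    exact map_add_right_eq_self volume (-a)
  have hpre : (fun x : ℝ => x - a) ⁻¹' Iic (c - a) = Iic c := by
    ext x; simp [sub_le_sub_iff_right]
  rw [hmap, hpre] at key
  exact key.symm

private lemma int_y_exp (B : ℝ) (hB : 0 < B) :
    ∫ y in Iic (0:ℝ), y * Real.exp (-B * y^2) = -(1/(2*B)) := by
  have hderiv : ∀ y ∈ Iic (0:ℝ), HasDerivAt (fun y => -(1/(2*B)) * Real.exp (-B * y^2))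
      (y * Real.exp (-B * y^2)) y := by
    intro y _
    have h1 : HasDerivAt (fun y : ℝ => -B * y^2) (-B * (2*y)) y := by
      simpa using ((hasDerivAt_pow 2 y).const_mul (-B))
    have h2 := (h1.exp).const_mul (-(1/(2*B)))
    refine h2.congr_deriv ?_
    have e : (2*B) * (1/(2*B)) = 1 := mul_one_div_cancel (by positivity)
    linear_combination (y * Real.exp (-B*y^2)) * e
  have hint : IntegrableOn (fun y : ℝ => y * Real.exp (-B * y^2)) (Iic 0) :=
    (integrable_mul_exp_neg_mul_sq hB).integrableOn
  have htend : Tendsto (fun y : ℝ => -(1/(2*B)) * Real.exp (-B * y^2)) atBot (nhds 0) := by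
    have hsq : Tendsto (fun y : ℝ => y^2) atBot atTop := by
      have hneg : Tendsto (fun y : ℝ => -y) atBot atTop := tendsto_neg_atBot_atTop
      have := (tendsto_pow_atTop (two_ne_zero)).comp hneg
      refine this.congr (fun y => ?_)
      simp [Function.comp]
    have : Tendsto (fun y : ℝ => -B * y^2) atBot atBot :=
      (tendsto_neg_atTop_atBot.comp (hsq.const_mul_atTop hB)).congr (by intro y; simp [Function.comp])
    have := (Real.tendsto_exp_atBot).comp this
    simpa using this.const_mul (-(1/(2*B)))
  have := integral_Iic_of_hasDerivAt_of_tendsto' hderiv hint htend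
  simpa using this


/-- Sheppard's orthant probability formula: for the standardized
bivariate normal density `φ_ρ` with correlation `ρ ∈ (−1,1)`, the negative orthant
probability is `∫_{−∞}^0 ∫_{−∞}^0 φ_ρ(x,y) dx dy = 1/4 + arcsin(ρ)/(2π)`. -/
theorem sheppard_orthant_probability (ρ : ℝ) (hρ : ρ ∈ Set.Ioo (-1 : ℝ) 1)
    (φ : ℝ → ℝ → ℝ)
    (hφ : ∀ x y : ℝ, φ x y =
      (1 / (2 * π * Real.sqrt (1 - ρ ^ 2))) *
        Real.exp (-(x ^ 2 - 2 * ρ * x * y + y ^ 2) / (2 * (1 - ρ ^ 2)))) :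
    ∫ y in Set.Iic (0:ℝ), ∫ x in Set.Iic (0:ℝ), φ x y
      = 1 / 4 + arcsin ρ / (2 * π) := by
  obtain ⟨h1, h2⟩ := hρ
  have hρ2 : 0 < 1 - ρ^2 := by nlinarith
  set s : ℝ := Real.sqrt (1 - ρ^2) with hs_def
  have hs : 0 < s := Real.sqrt_pos.mpr hρ2
  have hs2 : s^2 = 1 - ρ^2 := Real.sq_sqrt hρ2.le
  set k : ℝ := 1/(2*s^2) with hk_def
  have hk : 0 < k := by positivity
  set c : ℝ := 1/(2*π*s) with hc_def
  have hπ := Real.pi_pos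
  have hφ' : ∀ x y : ℝ, φ x y
      = c * (Real.exp (-(1/2) * y^2) * Real.exp (-k * (x - ρ*y)^2)) := by
    intro x y
    rw [hφ, ← Real.exp_add]
    congr 2
    rw [hk_def, show (1:ℝ) - ρ^2 = s^2 from hs2.symm]
    field_simp
    linear_combination y^2 * hs2
  have merge : ∀ y u : ℝ,
      (c * Real.exp (-(1/2)*y^2)) * ((-(ρ*y)) * Real.exp (-k * (ρ*y)^2 * u^2))
        = (-(c*ρ)) * (y * Real.exp (-(1/2 + k*ρ^2*u^2) * y^2)) := by
    intro y u
    rw [show -(1/2 + k*ρ^2*u^2) * y^2 = (-(1/2)*y^2) + (-k * (ρ*y)^2 * u^2) by ring,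
      Real.exp_add]
    ring
  have inner_eq : ∀ y : ℝ, ∫ x in Iic (0:ℝ), φ x y
      = (c * (Real.sqrt (π/k)/2)) * Real.exp (-(1/2) * y^2)
        + ∫ u in Ioc (0:ℝ) 1, (-(c*ρ)) * (y * Real.exp (-(1/2 + k*ρ^2*u^2) * y^2)) := by
    intro y
    have e1 : ∫ x in Iic (0:ℝ), φ x y
        = (c * Real.exp (-(1/2)*y^2)) * ∫ x in Iic (0:ℝ), Real.exp (-k * (x - ρ*y)^2) := by
      simp_rw [hφ', ← mul_assoc]
      exact integral_const_mul _ _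
    have e2 : ∫ x in Iic (0:ℝ), Real.exp (-k * (x - ρ*y)^2)
        = Real.sqrt (π/k)/2 + ∫ x in (0:ℝ)..(-(ρ*y)), Real.exp (-k * x^2) := by
      rw [translate_Iic (fun x => Real.exp (-k * x^2)) (ρ*y) 0]
      have hia : IntegrableOn (fun x : ℝ => Real.exp (-k*x^2)) (Iic 0) :=
        (integrable_exp_neg_mul_sq hk).integrableOn
      have hib : IntegrableOn (fun x : ℝ => Real.exp (-k*x^2)) (Iic (0 - ρ*y)) :=
        (integrable_exp_neg_mul_sq hk).integrableOn
      have hsub := intervalIntegral.integral_Iic_sub_Iic hia hib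
      rw [gauss_Iic k] at hsub
      rw [show (0:ℝ) - ρ*y = -(ρ*y) by ring] at hsub ⊢
      linarith
    have e3 : ∫ x in (0:ℝ)..(-(ρ*y)), Real.exp (-k * x^2)
        = ∫ u in (0:ℝ)..1, (-(ρ*y)) * Real.exp (-k * (ρ*y)^2 * u^2) := by
      have hsm := intervalIntegral.smul_integral_comp_mul_left
        (f := fun x => Real.exp (-k * x^2)) (a := 0) (b := 1) (-(ρ*y))
      simp only [mul_zero, mul_one, smul_eq_mul] at hsm
      rw [← hsm, ← intervalIntegral.integral_const_mul]
      congr 1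
      funext u
      congr 2
      ring
    rw [e1, e2, e3, mul_add, intervalIntegral.integral_of_le zero_le_one,
      ← integral_const_mul]
    congr 1
    · ring
    · exact setIntegral_congr_fun measurableSet_Ioc (fun u _ => merge y u)
  haveI hfin : IsFiniteMeasure (volume.restrict (Ioc (0:ℝ) 1)) :=
    ⟨by simp [Measure.restrict_apply_univ, Real.volume_Ioc]⟩
  have h1meas : Integrable (fun y : ℝ => |c*ρ| * (|y| * Real.exp (-(1/2) * y^2)))
      (volume.restrict (Iic 0)) := by
    have hbase : Integrable (fun y : ℝ => y * Real.exp (-(1/2) * y^2)) :=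
      integrable_mul_exp_neg_mul_sq (by norm_num)
    exact (((hbase.abs).const_mul |c*ρ|).congr (Filter.Eventually.of_forall fun y => by
      simp only []
      congr 1
      rw [abs_mul, abs_of_pos (Real.exp_pos _)])).restrict
  have hG : Integrable (fun p : ℝ × ℝ => (-(c*ρ)) * (p.1 * Real.exp (-(1/2 + k*ρ^2*p.2^2) * p.1^2)))
      ((volume.restrict (Iic (0:ℝ))).prod (volume.restrict (Ioc (0:ℝ) 1))) := by
    have hbound : Integrable
        (fun p : ℝ × ℝ => (|c*ρ| * (|p.1| * Real.exp (-(1/2) * p.1^2))) * (1:ℝ))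
        ((volume.restrict (Iic (0:ℝ))).prod (volume.restrict (Ioc (0:ℝ) 1))) :=
      h1meas.mul_prod (integrable_const 1)
    refine Integrable.mono' hbound ?_ (Filter.Eventually.of_forall fun p => ?_)
    · exact (Continuous.aestronglyMeasurable (by fun_prop))
    · have hexp : Real.exp (-(1/2 + k*ρ^2*p.2^2) * p.1^2) ≤ Real.exp (-(1/2) * p.1^2) := by
        apply Real.exp_le_exp.mpr
        have : 0 ≤ k*ρ^2*p.2^2*p.1^2 := by positivity
        nlinarith
      rw [Real.norm_eq_abs, abs_mul, abs_mul, abs_neg, abs_of_pos (Real.exp_pos _), mul_one]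
      gcongr
  have swap := integral_integral_swap (μ := volume.restrict (Iic (0:ℝ)))
    (ν := volume.restrict (Ioc (0:ℝ) 1))
    (f := fun y u => (-(c*ρ)) * (y * Real.exp (-(1/2 + k*ρ^2*u^2) * y^2))) hG
  have hA : Integrable (fun y : ℝ => (c * (Real.sqrt (π/k)/2)) * Real.exp (-(1/2) * y^2))
      (volume.restrict (Iic 0)) :=
    ((integrable_exp_neg_mul_sq (by norm_num : (0:ℝ) < 1/2)).const_mul _).restrict
  have hB := hG.integral_prod_left
  rw [integral_congr_ae (Filter.Eventually.of_forall inner_eq), integral_add hA hB]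
  have part1 : ∫ y in Iic (0:ℝ), (c * (Real.sqrt (π/k)/2)) * Real.exp (-(1/2) * y^2)
      = 1/4 := by
    rw [integral_const_mul, gauss_Iic]
    have hk2 : π/k = (2*π)*s^2 := by rw [hk_def]; field_simp
    have h12 : π/(1/2:ℝ) = 2*π := by ring
    rw [hk2, h12, Real.sqrt_mul (by positivity : (0:ℝ) ≤ 2*π), Real.sqrt_sq hs.le, hc_def]
    have h2π : Real.sqrt (2*π) * Real.sqrt (2*π) = 2*π := Real.mul_self_sqrt (by positivity)
    have h2' : Real.sqrt 2 * Real.sqrt π * (Real.sqrt 2 * Real.sqrt π) = 2*π := by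
      rw [← Real.sqrt_mul (by norm_num : (0:ℝ) ≤ 2) π]; exact h2π
    field_simp
    linear_combination 4 * h2π
  have part2 : ∫ y in Iic (0:ℝ), ∫ u in Ioc (0:ℝ) 1,
      (-(c*ρ)) * (y * Real.exp (-(1/2 + k*ρ^2*u^2) * y^2)) = arcsin ρ / (2*π) := by
    rw [swap]
    have inner2 : ∀ u : ℝ, (∫ y in Iic (0:ℝ), (-(c*ρ)) * (y * Real.exp (-(1/2 + k*ρ^2*u^2) * y^2)))
        = (c*ρ) * (1/(2*(1/2 + k*ρ^2*u^2))) := by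
      intro u
      have hBpos : 0 < 1/2 + k*ρ^2*u^2 := by positivity
      rw [integral_const_mul, int_y_exp _ hBpos]
      ring
    rw [integral_congr_ae (Filter.Eventually.of_forall inner2),
      ← intervalIntegral.integral_of_le zero_le_one]
    by_cases hρ0 : ρ = 0
    · simp [hρ0]
    · have ht : ρ/s ≠ 0 := div_ne_zero hρ0 hs.ne'
      have key : ∀ u : ℝ, (c*ρ) * (1/(2*(1/2 + k*ρ^2*u^2)))
          = (c*ρ) * (1/(1+((ρ/s)*u)^2)) := by
        intro u
        have : 2*(1/2 + k*ρ^2*u^2) = 1+((ρ/s)*u)^2 := by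
          rw [hk_def]; field_simp
        rw [this]
      simp_rw [key]
      rw [intervalIntegral.integral_const_mul]
      have hcml := intervalIntegral.integral_comp_mul_left
        (f := fun x => 1/(1+x^2)) (a := 0) (b := 1) ht
      simp only [mul_zero, mul_one, smul_eq_mul] at hcml
      rw [hcml, integral_one_div_one_add_sq, Real.arctan_zero, sub_zero]
      rw [Real.arcsin_eq_arctan ⟨by simpa using h1, h2⟩, ← hs_def, hc_def]
      field_simp
  rw [part1, part2]
end

section
/- Let C be a bivariate copula whose first-order partial derivatives ∂₁C and ∂₂C exist on (0,1)² and take values in [0,1], and are such that s ↦ ∂₁C(s,1−s) and s ↦ ∂₂C(s,1−s) are integrable on (0,1). Define j_C(u,v) = max(1−u−v, 0) − ∫_u¹ ∂₁C(s,1−s) ds − ∫₀^{1−v} ∂₂C(s,1−s) ds. Then −2 ≤ j_C(u,v) ≤ 1 for all (u,v) ∈ [0,1]², and consequently |6·j_C(u,v)| ≤ 12 for all (u,v) ∈ [0,1]². -/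
open MeasureTheory

lemma integral_mem_aux (f : ℝ → ℝ) (a b : ℝ) (h0 : 0 ≤ a) (hab : a ≤ b) (hb : b ≤ 1)
    (hint : IntervalIntegrable f volume a b)
    (hmem : ∀ s ∈ Set.Ioo (0:ℝ) 1, f s ∈ Set.Icc (0:ℝ) 1) :
    (∫ s in a..b, f s) ∈ Set.Icc (0:ℝ) (b - a) := by
  have hae : ∀ᵐ s ∂(volume : Measure ℝ), s ∈ Set.Icc a b → f s ∈ Set.Icc (0:ℝ) 1 := by
    have h01 : (volume : Measure ℝ) ({0, 1} : Set ℝ) = 0 :=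
      ((Set.finite_singleton (1:ℝ)).insert 0).measure_zero volume
    filter_upwards [compl_mem_ae_iff.mpr h01] with s hs hsab
    have hs' : s ≠ 0 ∧ s ≠ 1 := by simpa [not_or] using hs
    exact hmem s ⟨lt_of_le_of_ne (le_trans h0 hsab.1) (Ne.symm hs'.1),
      lt_of_le_of_ne (le_trans hsab.2 hb) hs'.2⟩
  constructor
  · have := intervalIntegral.integral_mono_ae_restrict (f := fun _ => (0:ℝ)) (g := f) hab
      intervalIntegrable_const hint ?_
    · simpa using this
    · filter_upwards [ae_restrict_mem measurableSet_Icc, ae_restrict_of_ae hae]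
        with s hs1 hs2 using (hs2 hs1).1
  · have := intervalIntegral.integral_mono_ae_restrict (f := f) (g := fun _ => (1:ℝ)) hab
      hint intervalIntegrable_const ?_
    · simpa using this
    · filter_upwards [ae_restrict_mem measurableSet_Icc, ae_restrict_of_ae hae]
        with s hs1 hs2 using (hs2 hs1).2

/-- If `C` is a copula whose partial derivatives `∂₁C` and `∂₂C` exist
on `(0,1)²` with values in `[0,1]`, and are integrable along the anti-diagonal, then
the influence function
`j_C(u,v) = max(1−u−v,0) − ∫_u¹ ∂₁C(s,1−s) ds − ∫₀^{1−v} ∂₂C(s,1−s) ds`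
satisfies `−2 ≤ j_C ≤ 1` on `[0,1]²`, and consequently `|6·j_C| ≤ 12` there. -/
theorem influence_function_bounded (C D₁ D₂ : ℝ → ℝ → ℝ) (hC : IsCopula C)
    (hD₁ : ∀ u v : ℝ, u ∈ Set.Ioo (0:ℝ) 1 → v ∈ Set.Ioo (0:ℝ) 1 →
      HasDerivAt (fun t => C t v) (D₁ u v) u)
    (hD₂ : ∀ u v : ℝ, u ∈ Set.Ioo (0:ℝ) 1 → v ∈ Set.Ioo (0:ℝ) 1 →
      HasDerivAt (fun t => C u t) (D₂ u v) v)
    (hD₁mem : ∀ u v : ℝ, u ∈ Set.Ioo (0:ℝ) 1 → v ∈ Set.Ioo (0:ℝ) 1 →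
      D₁ u v ∈ Set.Icc (0:ℝ) 1)
    (hD₂mem : ∀ u v : ℝ, u ∈ Set.Ioo (0:ℝ) 1 → v ∈ Set.Ioo (0:ℝ) 1 →
      D₂ u v ∈ Set.Icc (0:ℝ) 1)
    (hD₁int : IntervalIntegrable (fun s => D₁ s (1 - s)) MeasureTheory.volume 0 1)
    (hD₂int : IntervalIntegrable (fun s => D₂ s (1 - s)) MeasureTheory.volume 0 1) :
    ∀ u ∈ Set.Icc (0:ℝ) 1, ∀ v ∈ Set.Icc (0:ℝ) 1,
      (-2 ≤ max (1 - u - v) 0 - (∫ s in u..1, D₁ s (1 - s))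
          - ∫ s in (0:ℝ)..(1 - v), D₂ s (1 - s)) ∧
      (max (1 - u - v) 0 - (∫ s in u..1, D₁ s (1 - s))
          - (∫ s in (0:ℝ)..(1 - v), D₂ s (1 - s)) ≤ 1) ∧
      |6 * (max (1 - u - v) 0 - (∫ s in u..1, D₁ s (1 - s))
          - ∫ s in (0:ℝ)..(1 - v), D₂ s (1 - s))| ≤ 12 := by
  intro u hu v hv
  have hsub1 : Set.uIcc u 1 ⊆ Set.uIcc (0:ℝ) 1 := by
    rw [Set.uIcc_of_le hu.2, Set.uIcc_of_le (by norm_num : (0:ℝ) ≤ 1)]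
    exact Set.Icc_subset_Icc hu.1 le_rfl
  have h1 : (∫ s in u..1, D₁ s (1 - s)) ∈ Set.Icc (0:ℝ) (1 - u) :=
    integral_mem_aux _ u 1 hu.1 hu.2 le_rfl (hD₁int.mono_set hsub1)
      (fun s hs => hD₁mem s (1 - s) hs ⟨by linarith [hs.2], by linarith [hs.1]⟩)
  have hsub2 : Set.uIcc (0:ℝ) (1 - v) ⊆ Set.uIcc (0:ℝ) 1 := by
    rw [Set.uIcc_of_le (show (0:ℝ) ≤ 1 - v by linarith [hv.2]),
      Set.uIcc_of_le (by norm_num : (0:ℝ) ≤ 1)]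
    exact Set.Icc_subset_Icc le_rfl (by linarith [hv.1])
  have h2 : (∫ s in (0:ℝ)..(1 - v), D₂ s (1 - s)) ∈ Set.Icc (0:ℝ) (1 - v - 0) :=
    integral_mem_aux _ 0 (1 - v) le_rfl (by linarith [hv.2]) (by linarith [hv.1])
      (hD₂int.mono_set hsub2)
      (fun s hs => hD₂mem s (1 - s) hs ⟨by linarith [hs.2], by linarith [hs.1]⟩)
  have hm0 : (0:ℝ) ≤ max (1 - u - v) 0 := le_max_right _ _
  have hm1 : max (1 - u - v) 0 ≤ 1 := max_le (by linarith [hu.1, hv.1]) (by norm_num)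
  obtain ⟨h1a, h1b⟩ := h1
  obtain ⟨h2a, h2b⟩ := h2
  refine ⟨by linarith [hu.1, hv.1], by linarith, ?_⟩
  rw [abs_le]
  constructor <;> nlinarith [hu.1, hv.1]
end
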